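/- Let k ≥ 1 and let A and B be independent binomial random variables with parameters (k, 1/2). Then the expected absolute difference satisfies E[|A − B|] = k·C(2k, k)/2^{2k}, where C(2k, k) is the central binomial coefficient. -/

import Mathlib

open MeasureTheory ProbabilityTheory Real Filter

noncomputable section

namespace KVariance

/-- Matching cost between two `k`-tuples of points in `ℝ^d`: the minimum over permutations
`σ` of `(1/k) ∑ i, ‖x i - y (σ i)‖²`; this equals the squared 2-Wasserstein distance between
the two empirical measures. -/
def matchCost {d k : ℕ} (x y : Fin k → EuclideanSpace ℝ (Fin d)) : ℝ :=
  (1 / (k : ℝ)) * ⨅ σ : Equiv.Perm (Fin k), ∑ i, ‖x i - y (σ i)‖ ^ 2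

/-- The ambient scaling rate `ρ(k,d)`, with `ρ(1,d) = 1`. -/
def rho (k d : ℕ) : ℝ :=
  if k = 1 then 1
  else if d = 1 then (k : ℝ)
  else if d = 2 then (k : ℝ) / Real.log k
  else (k : ℝ) ^ ((2 : ℝ) / d)

/-- The `k`-variance of a measure `μ` on `ℝ^d`:
`(ρ(k,d)/2) · E[M(X,Y)]` where `X, Y` are independent `k`-tuples of i.i.d. samples from `μ`. -/
def kVar (k d : ℕ) (μ : Measure (EuclideanSpace ℝ (Fin d))) : ℝ :=
  rho k d / 2 *
    ∫ p, matchCost p.1 p.2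
      ∂((Measure.pi fun _ : Fin k => μ).prod (Measure.pi fun _ : Fin k => μ))

/-- Matching cost between two `k`-tuples of reals. -/
def matchCost1 {k : ℕ} (x y : Fin k → ℝ) : ℝ :=
  (1 / (k : ℝ)) * ⨅ σ : Equiv.Perm (Fin k), ∑ i, (x i - y (σ i)) ^ 2

/-- The `k`-variance of a measure on `ℝ` (where `ρ(k,1) = k`). -/
def kVar1 (k : ℕ) (μ : Measure ℝ) : ℝ :=
  (k : ℝ) / 2 *
    ∫ p, matchCost1 p.1 p.2
      ∂((Measure.pi fun _ : Fin k => μ).prod (Measure.pi fun _ : Fin k => μ))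

/-- The order statistics of a `k`-tuple of reals: `orderStat x i` is the `i`-th smallest
entry of `x` (with `i : Fin k`, zero-based). -/
def orderStat {k : ℕ} (x : Fin k → ℝ) : Fin k → ℝ := x ∘ Tuple.sort x

/-- The uniform distribution on `[0,1]`. -/
def unif : Measure ℝ := volume.restrict (Set.Icc (0 : ℝ) 1)

/-- Covariance of two real random variables. -/
def cov {Ω : Type*} [MeasurableSpace Ω] (X Y : Ω → ℝ) (μ : Measure Ω) : ℝ :=
  ∫ ω, (X ω - ∫ a, X a ∂μ) * (Y ω - ∫ a, Y a ∂μ) ∂μ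

end KVariance

open KVariance

namespace KVarAux
open Finset

lemma vand (k d : ℕ) (hd : d ≤ k) :
    ∑ j ∈ range (k+1-d), k.choose j * k.choose (j+d) = (2*k).choose (k+d) := by
  have h1 : (2*k).choose (k+d) = (2*k).choose (k-d) := by
    rw [← Nat.choose_symm (by omega : k + d ≤ 2*k)]
    congr 1; omega
  rw [h1, two_mul, Nat.add_choose_eq, Finset.Nat.sum_antidiagonal_eq_sum_range_succ_mk]
  rw [show (k - d).succ = k + 1 - d from by omega]
  refine Finset.sum_congr rfl fun j hj => ?_
  rw [mem_range] at hj
  congr 1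
  rw [← Nat.choose_symm (by omega : j + d ≤ k)]
  congr 1; omega

lemma upper (k : ℕ) : ∑ i ∈ range k, (2*k).choose (k+1+i) = ∑ i ∈ range k, (2*k).choose i := by
  rw [← Finset.sum_range_reflect (fun i => (2*k).choose (k+1+i)) k]
  refine Finset.sum_congr rfl fun i hi => ?_
  rw [mem_range] at hi
  rw [show k + 1 + (k - 1 - i) = 2*k - i from by omega, Nat.choose_symm (by omega)]

lemma upper_total (k : ℕ) :
    2 * (∑ i ∈ range k, (2*k).choose (k+1+i)) + (2*k).choose k = 2^(2*k) := by
  have h := Nat.sum_range_choose (2*k)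
  rw [show 2*k + 1 = (k+1) + k from by omega, Finset.sum_range_add, Finset.sum_range_succ,
    upper] at h
  rw [upper]
  omega

lemma weighted (K : ℕ) :
    ∑ i ∈ range (K+1), (K+2+i) * (2*(K+1)).choose (K+2+i) = (2*K+2) * 4^K := by
  have step : ∀ i, (K+2+i) * (2*(K+1)).choose (K+2+i) = (2*K+2) * (2*K+1).choose (K+1+i) := by
    intro i
    have h := Nat.add_one_mul_choose_eq (2*K+1) (K+1+i)
    rw [show K+2+i = K+1+i+1 from by omega, show 2*(K+1) = 2*K+1+1 from by omega,
      show 2*K+2 = 2*K+1+1 from by omega]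
    rw [mul_comm]; exact h.symm
  rw [Finset.sum_congr rfl fun i _ => step i, ← Finset.mul_sum]
  congr 1
  have hrefl : ∑ i ∈ range (K+1), (2*K+1).choose (K+1+i)
      = ∑ i ∈ range (K+1), (2*K+1).choose i := by
    rw [← Finset.sum_range_reflect (fun i => (2*K+1).choose (K+1+i)) (K+1)]
    refine Finset.sum_congr rfl fun i hi => ?_
    rw [mem_range] at hi
    rw [show K + 1 + (K + 1 - 1 - i) = 2*K+1 - i from by omega, Nat.choose_symm (by omega)]
  rw [hrefl, Nat.sum_range_choose_halfway]

lemma step12 (k : ℕ) :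
    ∑ i ∈ range (k+1), ∑ j ∈ range (k+1), (k.choose i : ℝ) * (k.choose j) * |(i:ℝ) - j|
    = 2 * ∑ i ∈ range (k+1), ∑ j ∈ range i, (k.choose i : ℝ) * (k.choose j) * ((i:ℝ) - j) := by
  have habs : ∀ a : ℝ, |a| = max a 0 + max (-a) 0 := by
    intro a; rcases le_or_gt 0 a with h | h
    · rw [abs_of_nonneg h, max_eq_left h, max_eq_right (by linarith), add_zero]
    · rw [abs_of_neg h, max_eq_right h.le, max_eq_left (by linarith), zero_add]
  have split : ∑ i ∈ range (k+1), ∑ j ∈ range (k+1),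
        (k.choose i : ℝ) * (k.choose j) * |(i:ℝ) - j|
      = (∑ i ∈ range (k+1), ∑ j ∈ range (k+1),
          (k.choose i : ℝ) * (k.choose j) * max ((i:ℝ) - j) 0)
        + ∑ i ∈ range (k+1), ∑ j ∈ range (k+1),
          (k.choose i : ℝ) * (k.choose j) * max ((j:ℝ) - i) 0 := by
    rw [← Finset.sum_add_distrib]
    refine Finset.sum_congr rfl fun i _ => ?_
    rw [← Finset.sum_add_distrib]
    refine Finset.sum_congr rfl fun j _ => ?_
    rw [habs ((i:ℝ) - j)]
    ring_nf
  rw [split]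
  have comm : ∑ i ∈ range (k+1), ∑ j ∈ range (k+1),
        (k.choose i : ℝ) * (k.choose j) * max ((j:ℝ) - i) 0
      = ∑ i ∈ range (k+1), ∑ j ∈ range (k+1),
        (k.choose i : ℝ) * (k.choose j) * max ((i:ℝ) - j) 0 := by
    rw [Finset.sum_comm]
    refine Finset.sum_congr rfl fun i _ => Finset.sum_congr rfl fun j _ => by ring
  rw [comm, ← two_mul]
  congr 1
  refine Finset.sum_congr rfl fun i hi => ?_
  rw [mem_range] at hi
  rw [← Finset.sum_subset (Finset.range_subset_range.2 (by omega : i ≤ k+1))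
      (fun j _ hj => by
        rw [mem_range, not_lt] at hj
        have : (i:ℝ) ≤ j := by exact_mod_cast hj
        rw [max_eq_right (by linarith), mul_zero])]
  refine Finset.sum_congr rfl fun j hj => ?_
  rw [mem_range] at hj
  have : (j:ℝ) < i := by exact_mod_cast hj
  rw [max_eq_left (by linarith)]

lemma step3 (k : ℕ) :
    ∑ i ∈ range (k+1), ∑ j ∈ range i, (k.choose i : ℝ) * (k.choose j) * ((i:ℝ) - j)
    = ∑ d ∈ Icc 1 k, (d:ℝ) * ∑ j ∈ range (k+1-d), ((k.choose (j+d) : ℝ) * (k.choose j)) := by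
  simp_rw [Finset.mul_sum]
  rw [Finset.sum_sigma', Finset.sum_sigma']
  refine Finset.sum_nbij' (fun p => ⟨p.1 - p.2, p.2⟩) (fun p => ⟨p.2 + p.1, p.2⟩) ?_ ?_ ?_ ?_ ?_
  · rintro ⟨i, j⟩ hp
    simp only [mem_sigma, mem_range, mem_Icc] at hp ⊢
    omega
  · rintro ⟨d, j⟩ hp
    simp only [mem_sigma, mem_range, mem_Icc] at hp ⊢
    omega
  · rintro ⟨i, j⟩ hp
    simp only [mem_sigma, mem_range] at hp
    simp only [Sigma.mk.inj_iff, heq_eq_eq]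
    exact ⟨by omega, trivial⟩
  · rintro ⟨d, j⟩ hp
    simp only [mem_sigma, mem_range, mem_Icc] at hp
    simp only [Sigma.mk.inj_iff, heq_eq_eq]
    exact ⟨by omega, trivial⟩
  · rintro ⟨i, j⟩ hp
    simp only [mem_sigma, mem_range] at hp
    simp only []
    rw [show j + (i - j) = i from by omega]
    have : ((i - j : ℕ) : ℝ) = (i:ℝ) - j := by
      have : j ≤ i := by omega
      push_cast [this]; ring
    rw [this]; ring
lemma key (K : ℕ) :
    ∑ d ∈ Icc 1 (K+1), (d:ℝ) * ∑ j ∈ range (K+1+1-d), (((K+1).choose (j+d) : ℝ) * ((K+1).choose j))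
      = (K+1 : ℝ) * ((2*(K+1)).choose (K+1)) / 2 := by
  set k := K + 1 with hk
  have inner : ∀ d ∈ Icc 1 k, (d:ℝ) * ∑ j ∈ range (k+1-d), ((k.choose (j+d) : ℝ) * (k.choose j))
      = (d:ℝ) * (((2*k).choose (k+d) : ℕ) : ℝ) := by
    intro d hd
    rw [mem_Icc] at hd
    congr 1
    rw [← vand k d hd.2]
    push_cast
    exact Finset.sum_congr rfl fun j _ => by ring
  rw [Finset.sum_congr rfl inner]
  have : Icc 1 k = Ico 1 (k+1) := by rw [Finset.Ico_add_one_right_eq_Icc]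
  rw [this, Finset.sum_Ico_eq_sum_range]
  simp only [show k + 1 - 1 = k from rfl]
  have split : ∀ i ∈ range k, ((1+i : ℕ):ℝ) * ((2*k).choose (k+(1+i)))
      = ((k+1+i : ℕ):ℝ) * ((2*k).choose (k+1+i)) - (k:ℝ) * ((2*k).choose (k+1+i)) := by
    intro i _
    rw [show k+(1+i) = k+1+i from by omega]
    push_cast
    ring
  rw [Finset.sum_congr rfl split, Finset.sum_sub_distrib, ← Finset.mul_sum]
  have hV : ∑ i ∈ range k, ((k+1+i : ℕ):ℝ) * ((2*k).choose (k+1+i)) = ((2*K+2) * 4^K : ℕ) := by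
    rw [← weighted K]
    push_cast [hk]
    refine Finset.sum_congr rfl fun i _ => by
      rw [show K+1+1+i = K+2+i from by omega, show 2*(K+1) = 2*K+2 from by omega]
      push_cast; ring
  rw [hV]
  have hU : ∑ i ∈ range k, (((2*k).choose (k+1+i) : ℕ) : ℝ)
      = ((2:ℝ)^(2*k) - ((2*k).choose k)) / 2 := by
    have h := congrArg (Nat.cast : ℕ → ℝ) (upper_total k)
    push_cast at h
    linarith
  rw [hU]
  have hpow : (2:ℝ)^(2*k) = 4^K * 4 := by
    rw [hk, show 2*(K+1) = 2*K+2 from by omega, pow_succ, pow_succ, pow_mul]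
    norm_num; ring
  push_cast
  rw [hpow, hk]
  push_cast
  ring

lemma final_sum (k : ℕ) (hk : 1 ≤ k) :
    ∑ i ∈ range (k+1), ∑ j ∈ range (k+1),
        (k.choose i : ℝ) * (k.choose j) * |(i:ℝ) - (j:ℝ)|
      = (k:ℝ) * ((2*k).choose k) := by
  obtain ⟨K, rfl⟩ : ∃ K, k = K + 1 := ⟨k-1, by omega⟩
  rw [step12, step3, key]
  push_cast
  ring

lemma binom_toReal (k : ℕ) (i : Fin (k+1)) :
    ((PMF.binomial (1/2) (by norm_num) k) i).toReal = (k.choose i : ℝ) / 2 ^ k := by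
  rw [PMF.binomial_apply]
  have h2 : (1 - ((1/2 : NNReal) : ENNReal)) = ((1/2 : NNReal) : ENNReal) := by
    rw [← ENNReal.coe_one, ← ENNReal.coe_sub]
    congr 1
    rw [tsub_eq_iff_eq_add_of_le (by norm_num)]
    norm_num
  rw [h2, Fin.val_last]
  rw [ENNReal.toReal_mul, ENNReal.toReal_mul, ENNReal.toReal_pow, ENNReal.toReal_pow]
  have h3 : ((1/2 : NNReal) : ENNReal).toReal = 1/2 := by
    rw [ENNReal.coe_toReal]; norm_num
  rw [h3, ENNReal.toReal_natCast, ← pow_add]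
  have : (i:ℕ) + (k - i) = k := by have := i.is_le; omega
  rw [this, div_pow, one_pow]
  ring

end KVarAux


/-- for independent binomial random variables `A, B` with parameters
`(k, 1/2)`, the expected absolute difference is `E|A - B| = k · C(2k, k) / 2^(2k)`. -/
theorem statement16 (k : ℕ) (hk : 1 ≤ k) :
    (∫ p, |(((p.1 : Fin (k + 1)) : ℕ) : ℝ) - (((p.2 : Fin (k + 1)) : ℕ) : ℝ)|
        ∂(((PMF.binomial (1 / 2) (by norm_num) k).toMeasure).prod
            ((PMF.binomial (1 / 2) (by norm_num) k).toMeasure)))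
      = (k : ℝ) * (Nat.choose (2 * k) k : ℝ) / 2 ^ (2 * k) := by
  classical
  open MeasureTheory Finset KVarAux in
  have hA : (∫ p, |(((p.1 : Fin (k + 1)) : ℕ) : ℝ) - (((p.2 : Fin (k + 1)) : ℕ) : ℝ)|
        ∂(((PMF.binomial (1 / 2) (by norm_num) k).toMeasure).prod
            ((PMF.binomial (1 / 2) (by norm_num) k).toMeasure)))
      = ∑ i : Fin (k+1), ∑ j : Fin (k+1),
          (((PMF.binomial (1/2) (by norm_num) k) i).toReal
            * ((PMF.binomial (1/2) (by norm_num) k) j).toReal)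
          * |((i:ℕ):ℝ) - ((j:ℕ):ℝ)| := by
    rw [MeasureTheory.integral_fintype .of_finite, Fintype.sum_prod_type]
    refine Finset.sum_congr rfl fun i _ => Finset.sum_congr rfl fun j _ => ?_
    have hset : ({(i, j)} : Set (Fin (k+1) × Fin (k+1))) = {i} ×ˢ {j} := by
      ext q; simp [Prod.ext_iff]
    rw [hset, Measure.real, MeasureTheory.Measure.prod_prod,
      PMF.toMeasure_apply_singleton _ _ (measurableSet_singleton _),
      PMF.toMeasure_apply_singleton _ _ (measurableSet_singleton _),
      ENNReal.toReal_mul, smul_eq_mul]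
  rw [hA]
  simp_rw [KVarAux.binom_toReal]
  open Finset KVarAux in
  have hB : (∑ i : Fin (k+1), ∑ j : Fin (k+1),
        ((k.choose i : ℝ)/2^k * ((k.choose j : ℝ)/2^k)) * |((i:ℕ):ℝ) - ((j:ℕ):ℝ)|)
      = ∑ i ∈ range (k+1), ∑ j ∈ range (k+1),
        ((k.choose i : ℝ)/2^k * ((k.choose j : ℝ)/2^k)) * |(i:ℝ) - (j:ℝ)| := by
    rw [Fin.sum_univ_eq_sum_range (fun i => ∑ j : Fin (k+1),
        ((k.choose i : ℝ)/2^k * ((k.choose j : ℝ)/2^k)) * |((i:ℕ):ℝ) - ((j:ℕ):ℝ)|)]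
    exact Finset.sum_congr rfl fun i _ => Fin.sum_univ_eq_sum_range
      (fun j => (k.choose i : ℝ)/2^k * ((k.choose j : ℝ)/2^k) * |(i:ℝ) - (j:ℝ)|) (k+1)
  rw [hB]
  open Finset KVarAux in
  have hC : (∑ i ∈ range (k+1), ∑ j ∈ range (k+1),
        ((k.choose i : ℝ)/2^k * ((k.choose j : ℝ)/2^k)) * |(i:ℝ) - (j:ℝ)|)
      = (∑ i ∈ range (k+1), ∑ j ∈ range (k+1),
          (k.choose i : ℝ) * (k.choose j) * |(i:ℝ) - (j:ℝ)|) / 2^(2*k) := by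
    rw [Finset.sum_div]
    refine Finset.sum_congr rfl fun i _ => ?_
    rw [Finset.sum_div]
    refine Finset.sum_congr rfl fun j _ => ?_
    rw [two_mul, pow_add]
    ring
  rw [hC, KVarAux.final_sum k hk]
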